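/- Let a, b ≥ 2 with log a / log b irrational, and suppose the sequence (b^{n_k} α) converges to 0 in ℝ/ℤ for some strictly increasing sequence (n_k) of naturals and some irrational α. Then for every ε > 0 and every cofinite set S' ⊆ ℕ, there exist k and ℓ such that the set { a^s b^{n_ℓ + j} α : s ∈ S', 0 ≤ j ≤ k } is 2·log(b)·ε-dense in ℝ/ℤ. -/

import Mathlib

open Real

private lemma lemA {ε r : ℝ} (hr : r ≠ 0) (hrε : |r| ≤ ε) (w : ℝ) :
    ∃ (j' : ℕ) (q : ℤ), (j' : ℝ) ≤ 1/|r| ∧ w - 1 ≤ q ∧ (q : ℝ) ≤ w + 1 ∧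
      |(j' : ℝ) * r + q - w| ≤ ε := by
  have hfr0 : 0 ≤ Int.fract w := Int.fract_nonneg w
  have hfr1 : Int.fract w < 1 := Int.fract_lt_one w
  have hw : (⌊w⌋ : ℝ) + Int.fract w = w := Int.floor_add_fract w
  rcases hr.lt_or_gt with hneg | hpos
  · -- r < 0
    set ρ := -r with hρ
    have hρ0 : 0 < ρ := by simp [hρ]; linarith
    set j' := ⌊(1 - Int.fract w) / ρ⌋₊ with hj'
    have hd0 : 0 ≤ (1 - Int.fract w) / ρ := div_nonneg (by linarith) hρ0.le
    have h1 : (j' : ℝ) ≤ (1 - Int.fract w) / ρ := Nat.floor_le hd0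
    have h2 : (1 - Int.fract w) / ρ < j' + 1 := Nat.lt_floor_add_one _
    have habs : |r| = ρ := abs_of_neg hneg
    have e1 : (j' : ℝ) * ρ ≤ 1 - Int.fract w := (le_div_iff₀ hρ0).mp h1
    have e2 : 1 - Int.fract w < ((j' : ℝ) + 1) * ρ := (div_lt_iff₀ hρ0).mp h2
    refine ⟨j', ⌊w⌋ + 1, ?_, ?_, ?_, ?_⟩
    · rw [habs]
      exact h1.trans (by gcongr <;> linarith)
    · push_cast; linarith [Int.floor_le w]
    · push_cast; linarith [Int.floor_le w]
    · have key : (j' : ℝ) * r + ((⌊w⌋ + 1 : ℤ) : ℝ) - w = (1 - Int.fract w) - j' * ρ := by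
        rw [hρ]; push_cast; linarith
      rw [key, abs_of_nonneg (by linarith)]
      calc 1 - Int.fract w - j' * ρ ≤ ρ := by nlinarith
        _ ≤ ε := habs ▸ hrε
  · -- r > 0
    set j' := ⌊Int.fract w / r⌋₊ with hj'
    have hd0 : 0 ≤ Int.fract w / r := div_nonneg hfr0 hpos.le
    have h1 : (j' : ℝ) ≤ Int.fract w / r := Nat.floor_le hd0
    have h2 : Int.fract w / r < j' + 1 := Nat.lt_floor_add_one _
    have habs : |r| = r := abs_of_pos hpos
    have e1 : (j' : ℝ) * r ≤ Int.fract w := (le_div_iff₀ hpos).mp h1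
    have e2 : Int.fract w < ((j' : ℝ) + 1) * r := (div_lt_iff₀ hpos).mp h2
    refine ⟨j', ⌊w⌋, ?_, ?_, ?_, ?_⟩
    · rw [habs]
      exact h1.trans (by gcongr <;> linarith)
    · linarith [Int.floor_le w, Int.lt_floor_add_one w]
    · linarith [Int.floor_le w]
    · have key : (j' : ℝ) * r + (⌊w⌋ : ℝ) - w = j' * r - Int.fract w := by linarith
      rw [key, abs_of_nonpos (by linarith)]
      calc -((j' : ℝ) * r - Int.fract w) ≤ r := by nlinarith
        _ ≤ ε := habs ▸ hrε

private lemma expLip {u v : ℝ} (hu : u ≤ Real.log 2) (hv : v ≤ Real.log 2) :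
    |Real.exp u - Real.exp v| ≤ 2 * |u - v| := by
  wlog h : v ≤ u generalizing u v
  · rw [abs_sub_comm, abs_sub_comm u v]; exact this hv hu (by linarith)
  have h1 : Real.exp u ≤ 2 := by
    calc Real.exp u ≤ Real.exp (Real.log 2) := Real.exp_le_exp.mpr hu
      _ = 2 := Real.exp_log (by norm_num)
  have h2 : Real.exp v ≤ Real.exp u := Real.exp_le_exp.mpr h
  have h3 : (v - u) + 1 ≤ Real.exp (v - u) := Real.add_one_le_exp _
  have h4 : Real.exp (v - u) * Real.exp u = Real.exp v := by
    rw [← Real.exp_add]; ring_nf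
  have h5 : Real.exp u - Real.exp v ≤ (u - v) * Real.exp u := by nlinarith [Real.exp_pos u]
  rw [abs_of_nonneg (by linarith), abs_of_nonneg (by linarith)]
  nlinarith [Real.exp_pos u]

private lemma lemB {la lb : ℝ} (hirr : Irrational (la / lb)) (hla : 0 < la) (hlb : 0 < lb)
    {ε : ℝ} (hε : 0 < ε) (N : ℕ) :
    ∃ c : ℝ, 0 < c ∧ ∀ M : ℝ, ∃ k : ℕ, ∀ y : ℝ, c ≤ y → y ≤ M →
      ∃ s j : ℕ, N ≤ s ∧ j ≤ k ∧ |(s : ℝ) * la + (j : ℝ) * lb - y| ≤ ε * lb := by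
  set β := la / lb with hβ
  have hβ0 : 0 < β := div_pos hla hlb
  -- Dirichlet approximation
  obtain ⟨p, d0, hd0pos, hd0n, hdir⟩ :=
    Real.exists_int_int_abs_mul_sub_le β (n := ⌈1/ε⌉₊ + 1) (Nat.succ_pos _)
  set d : ℕ := d0.toNat with hd
  have hdd : (d : ℝ) = (d0 : ℝ) := by
    exact_mod_cast congrArg (Int.cast : ℤ → ℝ) (Int.toNat_of_nonneg hd0pos.le)
  have hd1 : 1 ≤ d := by rw [hd]; omega
  set r : ℝ := d * β - p with hr
  have hrε : |r| ≤ ε := by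
    have h1 : (1 : ℝ)/ε ≤ ⌈1/ε⌉₊ := Nat.le_ceil _
    have h2 : |r| ≤ 1 / ((⌈1/ε⌉₊ + 1 : ℕ) + 1) := by rw [hr, hdd]; exact_mod_cast hdir
    have h3 : (0:ℝ) < ((⌈1/ε⌉₊ + 1 : ℕ) + 1 : ℝ) := by positivity
    have h4 : (1:ℝ)/ε ≤ ((⌈1/ε⌉₊ + 1 : ℕ) + 1 : ℝ) := by push_cast; linarith
    calc |r| ≤ 1 / ((⌈1/ε⌉₊ + 1 : ℕ) + 1 : ℝ) := h2
      _ ≤ 1 / (1/ε) := by gcongr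
      _ = ε := one_div_one_div ε
  have hrne : r ≠ 0 := by
    intro h0
    apply hirr
    have : β = (p : ℝ) / (d : ℝ) := by
      have hdne : (d : ℝ) ≠ 0 := by positivity
      field_simp
      rw [hr] at h0
      linarith
    exact ⟨(p : ℚ) / (d : ℚ), by push_cast; rw [this]⟩
  set J : ℝ := 1/|r| with hJ
  have hJ0 : 0 < J := by rw [hJ]; positivity
  refine ⟨lb * ((N : ℝ) * β + J * (|(p:ℝ)| + 1) + 2), by positivity, ?_⟩
  intro M
  refine ⟨⌈M/lb + J * (|(p:ℝ)| + 1) + 2⌉₊, ?_⟩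
  intro y hcy hyM
  set z := y / lb with hz
  set w := z - N * β with hw
  obtain ⟨j', q, hj'J, hq1, hq2, herr⟩ := lemA hrne hrε w
  have hwlarge : (N : ℝ) * β + J * (|(p:ℝ)| + 1) + 2 ≤ z := by
    rw [hz, le_div_iff₀ hlb]; linarith
  have hwge : J * (|(p:ℝ)| + 1) + 2 ≤ w := by rw [hw]; linarith
  -- j' * |p| ≤ J * |p|
  have hj'p : |(j' : ℝ) * p| ≤ J * |(p:ℝ)| := by
    rw [abs_mul, abs_of_nonneg (by positivity : (0:ℝ) ≤ (j':ℝ))]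
    exact mul_le_mul_of_nonneg_right (hJ ▸ hj'J) (abs_nonneg _)
  have hqj'p : 0 ≤ q - j' * p := by
    have : (0:ℝ) ≤ (q : ℝ) - (j' : ℝ) * (p : ℝ) := by
      have := abs_le.mp hj'p
      linarith
    exact_mod_cast this
  refine ⟨N + j' * d, (q - j' * p).toNat, Nat.le_add_right _ _, ?_, ?_⟩
  · -- j ≤ k
    have hcast : (((q - j' * p).toNat : ℤ) : ℝ) = (q : ℝ) - (j':ℝ) * (p:ℝ) := by
      rw [Int.toNat_of_nonneg hqj'p]; push_cast; ring
    rw [← Nat.cast_le (α := ℝ)]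
    have hble : (q : ℝ) - (j':ℝ) * (p:ℝ) ≤ M/lb + J * (|(p:ℝ)| + 1) + 2 := by
      have hwz : w ≤ z := by rw [hw]; nlinarith
      have hzM : z ≤ M / lb := by rw [hz]; gcongr
      have := abs_le.mp hj'p
      linarith
    calc ((q - j' * p).toNat : ℝ) = (q : ℝ) - (j':ℝ) * (p:ℝ) := by exact_mod_cast hcast
      _ ≤ M/lb + J * (|(p:ℝ)| + 1) + 2 := hble
      _ ≤ ⌈M/lb + J * (|(p:ℝ)| + 1) + 2⌉₊ := Nat.le_ceil _
  · -- the estimate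
    have hjr : (((N + j' * d : ℕ)) : ℝ) * β + (((q - j' * p).toNat : ℕ) : ℝ)
        = (N : ℝ) * β + (j' : ℝ) * r + q := by
      have hcast : (((q - j' * p).toNat : ℕ) : ℝ) = (q : ℝ) - (j':ℝ) * (p:ℝ) := by
        rw [← Int.cast_natCast, Int.toNat_of_nonneg hqj'p]; push_cast; ring
      push_cast
      rw [hcast, hr, hdd]
      ring
    have hβlb : β * lb = la := by rw [hβ]; field_simp
    have key : ((N + j' * d : ℕ) : ℝ) * la + (((q - j' * p).toNat : ℕ) : ℝ) * lb - y
        = ((j' : ℝ) * r + q - w) * lb := by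
      have hy : y = z * lb := by rw [hz]; field_simp
      calc ((N + j' * d : ℕ) : ℝ) * la + (((q - j' * p).toNat : ℕ) : ℝ) * lb - y
          = (((N + j' * d : ℕ) : ℝ) * β + (((q - j' * p).toNat : ℕ) : ℝ) - z) * lb := by
            rw [← hβlb, hy]; ring
        _ = ((N : ℝ) * β + (j' : ℝ) * r + q - z) * lb := by rw [hjr]
        _ = ((j' : ℝ) * r + q - w) * lb := by rw [hw]; ring
    rw [key, abs_mul, abs_of_pos hlb]
    exact mul_le_mul_of_nonneg_right herr hlb.le

private lemma normCoeLe (x : ℝ) : ‖((x : ℝ) : AddCircle (1:ℝ))‖ ≤ |x| := by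
  rw [AddCircle.norm_eq]
  simpa using round_le x 0

private lemma distCoeLe (x y : ℝ) :
    dist ((x : ℝ) : AddCircle (1:ℝ)) ((y : ℝ) : AddCircle (1:ℝ)) ≤ |x - y| := by
  rw [dist_eq_norm, ← AddCircle.coe_sub]
  exact normCoeLe _

theorem stmt19 (a b : ℕ) (ha : 2 ≤ a) (hb : 2 ≤ b)
    (hirr : Irrational (Real.log a / Real.log b))
    (n : ℕ → ℕ) (hn : StrictMono n) (α : ℝ) (hα : Irrational α)
    (hconv : Filter.Tendsto
      (fun ℓ : ℕ => ((((b : ℝ) ^ n ℓ * α : ℝ)) : AddCircle (1 : ℝ)))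
      Filter.atTop (nhds 0)) :
    ∀ ε : ℝ, 0 < ε → ∀ S' : Set ℕ, (S'ᶜ).Finite →
      ∃ k ℓ : ℕ, ∀ x : AddCircle (1 : ℝ),
        ∃ s ∈ S', ∃ j ≤ k,
          dist x ((((a : ℝ) ^ s * (b : ℝ) ^ (n ℓ + j) * α : ℝ)) : AddCircle (1 : ℝ)) ≤
            2 * Real.log b * ε := by
  intro ε hε S' hfin
  have haR : (2:ℝ) ≤ (a:ℝ) := by exact_mod_cast ha
  have hbR : (2:ℝ) ≤ (b:ℝ) := by exact_mod_cast hb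
  have hla : 0 < Real.log a := Real.log_pos (by linarith)
  have hlb : 0 < Real.log b := Real.log_pos (by linarith)
  have hlog2b : Real.log 2 ≤ Real.log b := by gcongr <;> norm_num
  have hlog2 : 0.6931471803 < Real.log 2 := Real.log_two_gt_d9
  -- shrink ε
  set ε₀ : ℝ := min ε (1/(4 * Real.log b)) with hε₀def
  have hε₀ : 0 < ε₀ := lt_min hε (by positivity)
  have hε₀ε : ε₀ ≤ ε := min_le_left _ _
  have hε₀lb : ε₀ * Real.log b ≤ 1/4 := by
    have h1 : ε₀ ≤ 1/(4 * Real.log b) := min_le_right _ _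
    rw [← le_div_iff₀ hlb]
    calc ε₀ ≤ 1/(4 * Real.log b) := h1
      _ = 1/4 / Real.log b := by ring
  have hε₀small : ε₀ ≤ 0.37 := by
    have h1 : ε₀ ≤ 1/(4 * Real.log b) := min_le_right _ _
    have h2 : (1:ℝ)/(4 * Real.log b) ≤ 1/(4 * 0.6931471803) :=
      one_div_le_one_div_of_le (by norm_num) (by nlinarith)
    calc ε₀ ≤ 1/(4 * 0.6931471803) := h1.trans h2
      _ ≤ 0.37 := by norm_num
  set δ : ℝ := ε₀ with hδdef
  have hδ0 : 0 < δ := hε₀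
  -- cofinite threshold
  obtain ⟨B, hB⟩ := hfin.bddAbove
  have hN : ∀ s : ℕ, B + 1 ≤ s → s ∈ S' := by
    intro s hs
    by_contra hsn
    exact absurd (hB hsn) (by omega)
  -- Lemma B
  obtain ⟨c, hc0, hc⟩ := lemB hirr hla hlb hε₀ (B + 1)
  -- fractional parts
  set t : ℕ → ℝ := fun ℓ => (b:ℝ)^(n ℓ) * α - round ((b:ℝ)^(n ℓ) * α) with ht
  have htne : ∀ ℓ, t ℓ ≠ 0 := by
    intro ℓ h0
    apply hα
    refine ⟨(round ((b:ℝ)^(n ℓ) * α) : ℚ) / ((b:ℚ)^(n ℓ)), ?_⟩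
    have hbne : ((b:ℝ))^(n ℓ) ≠ 0 := by positivity
    have : (b:ℝ)^(n ℓ) * α = (round ((b:ℝ)^(n ℓ) * α) : ℝ) := by
      rw [ht] at h0; simp only at h0; linarith
    push_cast
    field_simp
    linarith
  -- choose ℓ
  have hball : ∃ ℓ, |t ℓ| < δ * Real.exp (-c) := by
    have hpos : 0 < δ * Real.exp (-c) := by positivity
    obtain ⟨L, hL⟩ := Metric.tendsto_atTop.mp hconv _ hpos
    refine ⟨L, ?_⟩
    have := hL L le_rfl
    rw [dist_zero_right, AddCircle.norm_eq] at this
    simpa [ht] using this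
  obtain ⟨ℓ, htℓ⟩ := hball
  set T : ℝ := |t ℓ| with hT
  have hT0 : 0 < T := abs_pos.mpr (htne ℓ)
  have hTlt : T < δ * Real.exp (-c) := htℓ
  set M : ℝ := Real.log (1 + δ) - Real.log T with hM
  obtain ⟨k, hk⟩ := hc M
  refine ⟨k, ℓ, ?_⟩
  have hlogT : Real.log T < Real.log δ - c := by
    have := Real.log_lt_log hT0 hTlt
    rwa [Real.log_mul (ne_of_gt hδ0) (Real.exp_ne_zero _), Real.log_exp] at this
  -- the key density claim
  have key : ∀ z : AddCircle (1:ℝ), ∃ s ∈ S', ∃ j ≤ k,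
      dist z ((((a:ℝ)^s * (b:ℝ)^j * T : ℝ)) : AddCircle (1:ℝ)) ≤ 2 * Real.log b * ε₀ := by
    intro z
    obtain ⟨x₀, rfl⟩ : ∃ x₀ : ℝ, ((x₀ : ℝ) : AddCircle (1:ℝ)) = z :=
      Quotient.exists_rep z
    set y' : ℝ := δ + Int.fract (x₀ - δ) with hy'
    have hy'δ : δ ≤ y' := by
      have := Int.fract_nonneg (x₀ - δ); rw [hy']; linarith
    have hy'lt : y' < 1 + δ := by
      have := Int.fract_lt_one (x₀ - δ); rw [hy']; linarith
    have hy'0 : 0 < y' := lt_of_lt_of_le hδ0 hy'δ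
    have hy'z : ((y' : ℝ) : AddCircle (1:ℝ)) = ((x₀ : ℝ) : AddCircle (1:ℝ)) := by
      have hrep : y' = x₀ + ((-⌊x₀ - δ⌋ : ℤ) : ℝ) := by
        rw [hy', Int.fract]; push_cast; ring
      rw [hrep, AddCircle.coe_add]
      have : (((-⌊x₀ - δ⌋ : ℤ) : ℝ) : AddCircle (1:ℝ)) = 0 := by
        rw [AddCircle.coe_eq_zero_iff]
        exact ⟨-⌊x₀ - δ⌋, by simp⟩
      rw [this, add_zero]
    set y : ℝ := Real.log y' - Real.log T with hy
    have hyc : c ≤ y := by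
      have h1 : Real.log δ ≤ Real.log y' := Real.log_le_log hδ0 hy'δ
      rw [hy]; linarith
    have hyM : y ≤ M := by
      have h1 : Real.log y' ≤ Real.log (1 + δ) := Real.log_le_log hy'0 hy'lt.le
      rw [hy, hM]; linarith
    obtain ⟨s, j, hsN, hjk, hest⟩ := hk y hyc hyM
    refine ⟨s, hN s hsN, j, hjk, ?_⟩
    set u : ℝ := (s:ℝ) * Real.log a + (j:ℝ) * Real.log b + Real.log T with hu
    have hexpu : Real.exp u = (a:ℝ)^s * (b:ℝ)^j * T := by
      rw [hu, Real.exp_add, Real.exp_add, Real.exp_nat_mul, Real.exp_nat_mul,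
        Real.exp_log (by linarith : (0:ℝ) < (a:ℝ)),
        Real.exp_log (by linarith : (0:ℝ) < (b:ℝ)), Real.exp_log hT0]
    have herr : |u - Real.log y'| ≤ ε₀ * Real.log b := by
      have : u - Real.log y' = (s:ℝ) * Real.log a + (j:ℝ) * Real.log b - y := by
        rw [hu, hy]; ring
      rw [this]; exact hest
    have hlogy'2 : Real.log y' ≤ Real.log 2 := by
      have h1 : Real.log y' ≤ Real.log (1 + δ) := Real.log_le_log hy'0 hy'lt.le
      have h2 : Real.log (1 + δ) ≤ δ := by
        have := Real.log_le_sub_one_of_pos (by linarith : (0:ℝ) < 1 + δ); linarith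
      have h3 : δ ≤ 0.37 := hε₀small
      linarith
    have hu2 : u ≤ Real.log 2 := by
      have h1 := (abs_le.mp herr).2
      have h2 : Real.log y' ≤ 0.37 := by
        have h2' : Real.log (1 + δ) ≤ δ := by
          have := Real.log_le_sub_one_of_pos (by linarith : (0:ℝ) < 1 + δ); linarith
        have := Real.log_le_log hy'0 hy'lt.le
        linarith [hε₀small]
      have : u ≤ 0.37 + 1/4 := by linarith [hε₀lb]
      linarith
    have happ : |(a:ℝ)^s * (b:ℝ)^j * T - y'| ≤ 2 * (ε₀ * Real.log b) := by
      have h1 : |Real.exp u - Real.exp (Real.log y')| ≤ 2 * |u - Real.log y'| :=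
        expLip hu2 hlogy'2
      rw [hexpu, Real.exp_log hy'0] at h1
      calc |(a:ℝ)^s * (b:ℝ)^j * T - y'| ≤ 2 * |u - Real.log y'| := h1
        _ ≤ 2 * (ε₀ * Real.log b) := by linarith
    calc dist (((x₀:ℝ)) : AddCircle (1:ℝ)) ((((a:ℝ)^s * (b:ℝ)^j * T : ℝ)) : AddCircle (1:ℝ))
        = dist (((y':ℝ)) : AddCircle (1:ℝ)) ((((a:ℝ)^s * (b:ℝ)^j * T : ℝ)) : AddCircle (1:ℝ)) := by
          rw [hy'z]
      _ ≤ |y' - (a:ℝ)^s * (b:ℝ)^j * T| := distCoeLe _ _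
      _ = |(a:ℝ)^s * (b:ℝ)^j * T - y'| := abs_sub_comm _ _
      _ ≤ 2 * (ε₀ * Real.log b) := happ
      _ = 2 * Real.log b * ε₀ := by ring
  -- transfer back to the original sequence
  have hcoe : ∀ s j : ℕ,
      ((((a:ℝ)^s * (b:ℝ)^(n ℓ + j) * α : ℝ)) : AddCircle (1:ℝ))
        = ((((a:ℝ)^s * (b:ℝ)^j * t ℓ : ℝ)) : AddCircle (1:ℝ)) := by
    intro s j
    rw [← sub_eq_zero, ← AddCircle.coe_sub, AddCircle.coe_eq_zero_iff]
    refine ⟨(a^s * b^j : ℕ) * round ((b:ℝ)^(n ℓ) * α), ?_⟩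
    rw [ht]
    simp only [zsmul_eq_mul, mul_one]
    push_cast
    rw [pow_add]
    ring
  intro x
  rcases (htne ℓ).lt_or_gt with hneg | hpos
  · -- t ℓ < 0, T = -t ℓ
    have hTeq : T = -(t ℓ) := abs_of_neg hneg
    obtain ⟨s, hs, j, hj, hd⟩ := key (-x)
    refine ⟨s, hs, j, (by omega : j ≤ k), ?_⟩
    rw [hcoe s j]
    have hco : ((((a:ℝ)^s * (b:ℝ)^j * T : ℝ)) : AddCircle (1:ℝ))
        = -((((a:ℝ)^s * (b:ℝ)^j * t ℓ : ℝ)) : AddCircle (1:ℝ)) := by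
      rw [← AddCircle.coe_neg]
      congr 1
      rw [hTeq]; ring
    rw [hco] at hd
    calc dist x ((((a:ℝ)^s * (b:ℝ)^j * t ℓ : ℝ)) : AddCircle (1:ℝ))
        = dist (-x) (-((((a:ℝ)^s * (b:ℝ)^j * t ℓ : ℝ)) : AddCircle (1:ℝ))) :=
          (dist_neg_neg _ _).symm
      _ ≤ 2 * Real.log b * ε₀ := hd
      _ ≤ 2 * Real.log b * ε := by gcongr
  · -- 0 < t ℓ, T = t ℓ
    have hTeq : T = t ℓ := abs_of_pos hpos
    obtain ⟨s, hs, j, hj, hd⟩ := key x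
    refine ⟨s, hs, j, hj, ?_⟩
    rw [hcoe s j, ← hTeq]
    exact hd.trans (by gcongr)
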